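/- Let A and B be associative algebras over a field F, each admitting a slowly increasing filtration. Then the tensor product algebra A ⊗_F B admits a slowly increasing filtration, namely F_k(A⊗B) = ∑_{i+j=k} F_i A ⊗ F_j B. -/

import Mathlib

open Filter Real Topology

private lemma aux_bound (a : ℕ → ℝ) (h0 : ∀ k, 0 ≤ a k)
    (hbd : IsBoundedUnder (· ≤ ·) atTop (fun k : ℕ => a k ^ ((1:ℝ)/(k:ℝ))))
    (hl : limsup (fun k : ℕ => a k ^ ((1:ℝ)/(k:ℝ))) atTop ≤ 1)
    {ε : ℝ} (hε : 0 < ε) : ∃ C : ℝ, 1 ≤ C ∧ ∀ k, a k ≤ C * (1+ε)^k := by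
  have h1 : limsup (fun k : ℕ => a k ^ ((1:ℝ)/(k:ℝ))) atTop < 1 + ε :=
    lt_of_le_of_lt hl (by linarith)
  obtain ⟨N, hN⟩ := Filter.eventually_atTop.1 (Filter.eventually_lt_of_limsup_lt h1 hbd)
  refine ⟨1 + ∑ j ∈ Finset.range (N+1), a j,
    le_add_of_nonneg_right (Finset.sum_nonneg fun j _ => h0 j), fun k => ?_⟩
  have hpow1 : (1:ℝ) ≤ (1+ε)^k := one_le_pow₀ (by linarith)
  rcases le_or_gt k N with hk | hk
  · have h2 : a k ≤ ∑ j ∈ Finset.range (N+1), a j :=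
      Finset.single_le_sum (fun j _ => h0 j) (Finset.mem_range.2 (Nat.lt_succ_of_le hk))
    have h3 : (0:ℝ) ≤ ∑ j ∈ Finset.range (N+1), a j := Finset.sum_nonneg fun j _ => h0 j
    nlinarith
  · have hk0 : (k:ℝ) ≠ 0 := Nat.cast_ne_zero.2 (by omega)
    have hle : a k ^ ((1:ℝ)/(k:ℝ)) ≤ 1 + ε := (hN k hk.le).le
    have heq : a k = (a k ^ ((1:ℝ)/(k:ℝ)))^(k:ℕ) := by
      rw [← Real.rpow_natCast (a k ^ ((1:ℝ)/(k:ℝ))) k, ← Real.rpow_mul (h0 k), one_div,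
        inv_mul_cancel₀ hk0, Real.rpow_one]
    have h4 : (a k ^ ((1:ℝ)/(k:ℝ)))^(k:ℕ) ≤ (1+ε)^k :=
      pow_le_pow_left₀ (Real.rpow_nonneg (h0 k) _) hle k
    have h5 : (0:ℝ) ≤ ∑ j ∈ Finset.range (N+1), a j := Finset.sum_nonneg fun j _ => h0 j
    nlinarith [heq ▸ h4]

private lemma aux_tend (D : ℝ) (hD : 1 ≤ D) :
    Tendsto (fun k : ℕ => (((k:ℝ)+1)*D) ^ ((1:ℝ)/(k:ℝ))) atTop (𝓝 1) := by
  have hD0 : (0:ℝ) < D := by linarith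
  have hu1 : Tendsto (fun k : ℕ => ((k:ℝ)+1)) atTop atTop :=
    tendsto_atTop_add_const_right _ 1 (tendsto_natCast_atTop_atTop (R := ℝ))
  have hu : Tendsto (fun k : ℕ => ((k:ℝ)+1)*D) atTop atTop := hu1.atTop_mul_const hD0
  have hp0 : Tendsto (fun x : ℝ => Real.log x / x) atTop (𝓝 0) :=
    Real.isLittleO_log_id_atTop.tendsto_div_nhds_zero
  have hp : Tendsto (fun k : ℕ => Real.log (((k:ℝ)+1)*D) / (((k:ℝ)+1)*D)) atTop (𝓝 0) :=
    hp0.comp hu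
  have hq : Tendsto (fun k : ℕ => (((k:ℝ)+1)*D) / (k:ℝ)) atTop (𝓝 D) := by
    have : Tendsto (fun k : ℕ => D + D/(k:ℝ)) atTop (𝓝 (D + 0)) :=
      tendsto_const_nhds.add (tendsto_const_div_atTop_nhds_zero_nat D)
    rw [add_zero] at this
    refine this.congr' ?_
    filter_upwards [eventually_ge_atTop 1] with k hk
    have hk0 : (k:ℝ) ≠ 0 := Nat.cast_ne_zero.2 (by omega)
    field_simp
  have hmul : Tendsto (fun k : ℕ =>
      (Real.log (((k:ℝ)+1)*D) / (((k:ℝ)+1)*D)) * ((((k:ℝ)+1)*D) / (k:ℝ))) atTop (𝓝 0) := by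
    simpa using hp.mul hq
  have hexp : Tendsto (fun k : ℕ => Real.exp
      ((Real.log (((k:ℝ)+1)*D) / (((k:ℝ)+1)*D)) * ((((k:ℝ)+1)*D) / (k:ℝ)))) atTop (𝓝 1) := by
    have := (Real.continuous_exp.tendsto 0).comp hmul
    rw [Real.exp_zero] at this
    exact this
  refine hexp.congr' ?_
  filter_upwards [eventually_ge_atTop 1] with k hk
  have hk0 : (k:ℝ) ≠ 0 := Nat.cast_ne_zero.2 (by omega)
  have hu0 : (0:ℝ) < ((k:ℝ)+1)*D := by positivity
  rw [Real.rpow_def_of_pos hu0]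
  congr 1
  field_simp

private lemma aux_conv (a b c : ℕ → ℝ) (ha0 : ∀ k, 0 ≤ a k) (hb0 : ∀ k, 0 ≤ b k)
    (hc0 : ∀ k, 0 ≤ c k)
    (hab : IsBoundedUnder (· ≤ ·) atTop (fun k : ℕ => a k ^ ((1:ℝ)/(k:ℝ))))
    (hbb : IsBoundedUnder (· ≤ ·) atTop (fun k : ℕ => b k ^ ((1:ℝ)/(k:ℝ))))
    (ha : limsup (fun k : ℕ => a k ^ ((1:ℝ)/(k:ℝ))) atTop ≤ 1)
    (hb : limsup (fun k : ℕ => b k ^ ((1:ℝ)/(k:ℝ))) atTop ≤ 1)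
    (hc : ∀ k, c k ≤ ∑ i ∈ Finset.range (k+1), a i * b (k-i)) :
    limsup (fun k : ℕ => c k ^ ((1:ℝ)/(k:ℝ))) atTop ≤ 1 := by
  have hcob : IsCoboundedUnder (· ≤ ·) atTop (fun k : ℕ => c k ^ ((1:ℝ)/(k:ℝ))) :=
    IsBoundedUnder.isCoboundedUnder_le
      (isBoundedUnder_of ⟨0, fun k => Real.rpow_nonneg (hc0 k) _⟩)
  refine le_of_forall_gt_imp_ge_of_dense fun y hy => ?_
  set ε := y - 1 with hεdef
  have hε : 0 < ε := by simp [hεdef]; linarith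
  obtain ⟨CA, hCA1, hCA⟩ := aux_bound a ha0 hab ha hε
  obtain ⟨CB, hCB1, hCB⟩ := aux_bound b hb0 hbb hb hε
  set D := CA * CB with hDdef
  have hD1 : 1 ≤ D := by nlinarith
  have hD0 : (0:ℝ) < D := by linarith
  have key : ∀ k : ℕ, 1 ≤ k → c k ^ ((1:ℝ)/(k:ℝ)) ≤ (((k:ℝ)+1)*D) ^ ((1:ℝ)/(k:ℝ)) * (1+ε) := by
    intro k hk
    have hk0 : (k:ℝ) ≠ 0 := Nat.cast_ne_zero.2 (by omega)
    have hsum : c k ≤ ((k:ℝ)+1) * D * (1+ε)^k := by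
      refine (hc k).trans ?_
      have hterm : ∀ i ∈ Finset.range (k+1), a i * b (k-i) ≤ D * (1+ε)^k := by
        intro i hi
        have hik : i ≤ k := by simpa [Nat.lt_succ_iff] using Finset.mem_range.1 hi
        have h1 : a i * b (k-i) ≤ (CA * (1+ε)^i) * (CB * (1+ε)^(k-i)) := by
          have := hCA i; have := hCB (k-i)
          have h1ε : (0:ℝ) ≤ (1+ε)^i := by positivity
          nlinarith [ha0 i, hb0 (k-i), pow_nonneg (by linarith : (0:ℝ) ≤ 1+ε) (k-i)]
        refine h1.trans (le_of_eq ?_)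
        rw [hDdef]
        rw [show (CA * (1+ε)^i) * (CB * (1+ε)^(k-i)) = CA*CB*((1+ε)^i*(1+ε)^(k-i)) by ring,
          ← pow_add, Nat.add_sub_cancel' hik]
      calc ∑ i ∈ Finset.range (k+1), a i * b (k-i) ≤ ∑ _i ∈ Finset.range (k+1), D * (1+ε)^k :=
            Finset.sum_le_sum hterm
        _ = ((k:ℝ)+1) * D * (1+ε)^k := by
            rw [Finset.sum_const, Finset.card_range]; push_cast; ring
    have h2 : c k ^ ((1:ℝ)/(k:ℝ)) ≤ (((k:ℝ)+1) * D * (1+ε)^k) ^ ((1:ℝ)/(k:ℝ)) :=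
      Real.rpow_le_rpow (hc0 k) hsum (by positivity)
    refine h2.trans (le_of_eq ?_)
    rw [Real.mul_rpow (by positivity) (by positivity)]
    congr 1
    rw [← Real.rpow_natCast (1+ε) k, ← Real.rpow_mul (by linarith), mul_one_div,
      div_self hk0, Real.rpow_one]
  have hg : Tendsto (fun k : ℕ => (((k:ℝ)+1)*D) ^ ((1:ℝ)/(k:ℝ)) * (1+ε)) atTop (𝓝 (1+ε)) := by
    simpa using (aux_tend D hD1).mul_const (1+ε)
  have hgb : IsBoundedUnder (· ≤ ·) atTop
      (fun k : ℕ => (((k:ℝ)+1)*D) ^ ((1:ℝ)/(k:ℝ)) * (1+ε)) := hg.isBoundedUnder_le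
  have hle : limsup (fun k : ℕ => c k ^ ((1:ℝ)/(k:ℝ))) atTop ≤
      limsup (fun k : ℕ => (((k:ℝ)+1)*D) ^ ((1:ℝ)/(k:ℝ)) * (1+ε)) atTop := by
    refine Filter.limsup_le_limsup ?_ hcob hgb
    filter_upwards [eventually_ge_atTop 1] with k hk
    exact key k hk
  rw [hg.limsup_eq] at hle
  simpa [hεdef] using hle

private lemma aux_finrank_finset_sup_le {F V : Type*} [Field F] [AddCommGroup V] [Module F V]
    (s : Finset ℕ) (T : ℕ → Submodule F V) [∀ i, FiniteDimensional F (T i)] :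
    Module.finrank F (s.sup T : Submodule F V) ≤ ∑ i ∈ s, Module.finrank F (T i) := by
  classical
  induction s using Finset.cons_induction with
  | empty => simp [finrank_bot]
  | cons i s hi ih =>
    rw [Finset.sup_cons, Finset.sum_cons]
    exact (Submodule.finrank_add_le_finrank_add_finrank _ _).trans (Nat.add_le_add_left ih _)

open scoped TensorProduct

/-- If `A` and `B` are `F`-algebras each with a slowly increasing filtration, then the
tensor product algebra `A ⊗[F] B` admits a slowly increasing filtration, namely
`F_k(A⊗B) = ∑_{i+j=k} F_i A ⊗ F_j B`. -/
theorem tensor_product_tempered {F A B : Type*} [Field F]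
    [Ring A] [Algebra F A] [Ring B] [Algebra F B]
    (FA : ℕ → Submodule F A) (FB : ℕ → Submodule F B)
    (hAmono : Monotone FA) (hAexh : ∀ x : A, ∃ k, x ∈ FA k)
    (hAone : (1 : A) ∈ FA 0)
    (hAmul : ∀ k l (x y : A), x ∈ FA k → y ∈ FA l → x * y ∈ FA (k + l))
    (hAfin : ∀ k, FiniteDimensional F (FA k))
    (hAslow : Filter.limsup
      (fun k : ℕ => ((Module.finrank F (FA k) : ℝ)) ^ ((1 : ℝ) / (k : ℝ)))
      Filter.atTop ≤ 1)
    (hBmono : Monotone FB) (hBexh : ∀ x : B, ∃ k, x ∈ FB k)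
    (hBone : (1 : B) ∈ FB 0)
    (hBmul : ∀ k l (x y : B), x ∈ FB k → y ∈ FB l → x * y ∈ FB (k + l))
    (hBfin : ∀ k, FiniteDimensional F (FB k))
    (hBslow : Filter.limsup
      (fun k : ℕ => ((Module.finrank F (FB k) : ℝ)) ^ ((1 : ℝ) / (k : ℝ)))
      Filter.atTop ≤ 1)
    (G : ℕ → Submodule F (A ⊗[F] B))
    (hG : ∀ k, G k = ⨆ i ∈ Finset.range (k + 1),
      Submodule.span F
        (Set.image2 (fun a b => a ⊗ₜ[F] b) (FA i : Set A) (FB (k - i) : Set B))) :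
    Monotone G ∧ (∀ x : A ⊗[F] B, ∃ k, x ∈ G k) ∧ (1 : A ⊗[F] B) ∈ G 0 ∧
    (∀ k l (x y : A ⊗[F] B), x ∈ G k → y ∈ G l → x * y ∈ G (k + l)) ∧
    (∀ k, FiniteDimensional F (G k)) ∧
    Filter.limsup
      (fun k : ℕ => ((Module.finrank F (G k) : ℝ)) ^ ((1 : ℝ) / (k : ℝ)))
      Filter.atTop ≤ 1 := by
  classical
  have hmem : ∀ (i k : ℕ) (a : A) (b : B), i ≤ k → a ∈ FA i → b ∈ FB (k-i) →
      a ⊗ₜ[F] b ∈ G k := by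
    intro i k a b hik ha hb
    rw [hG k]
    have h1 : Submodule.span F
        (Set.image2 (fun a b => a ⊗ₜ[F] b) (FA i : Set A) (FB (k-i) : Set B))
        ≤ ⨆ i ∈ Finset.range (k+1), Submodule.span F
          (Set.image2 (fun a b => a ⊗ₜ[F] b) (FA i : Set A) (FB (k-i) : Set B)) :=
      le_iSup₂ (f := fun i _ => Submodule.span F
        (Set.image2 (fun a b => a ⊗ₜ[F] b) (FA i : Set A) (FB (k-i) : Set B))) i
        (Finset.mem_range.2 (by omega))
    exact h1 (Submodule.subset_span (Set.mem_image2_of_mem ha hb))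
  have hmono : Monotone G := by
    apply monotone_nat_of_le_succ
    intro k
    rw [hG k, hG (k+1)]
    refine iSup₂_le fun i hi => ?_
    have hik : i ≤ k := by have := Finset.mem_range.1 hi; omega
    have hi' : i ∈ Finset.range (k+2) := Finset.mem_range.2 (by omega)
    refine le_trans ?_ (le_iSup₂ (f := fun i _ => Submodule.span F
      (Set.image2 (fun a b => a ⊗ₜ[F] b) (FA i : Set A) (FB (k+1-i) : Set B))) i hi')
    exact Submodule.span_mono (Set.image2_subset le_rfl (hBmono (by omega)))
  have hTfin : ∀ i j, FiniteDimensional F (Submodule.span F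
      (Set.image2 (fun a b => a ⊗ₜ[F] b) (FA i : Set A) (FB j : Set B))) := by
    intro i j
    haveI := hAfin i; haveI := hBfin j
    have hspan_eq : Submodule.span F
        (Set.image2 (fun a b => a ⊗ₜ[F] b) (FA i : Set A) (FB j : Set B))
        = LinearMap.range (TensorProduct.map (FA i).subtype (FB j).subtype) := by
      rw [TensorProduct.range_map_eq_span_tmul]
      congr 1
      ext t
      constructor
      · rintro ⟨a, ha, b, hb, rfl⟩
        exact ⟨⟨a, ha⟩, ⟨b, hb⟩, rfl⟩
      · rintro ⟨m, n, rfl⟩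
        exact ⟨m, m.2, n, n.2, rfl⟩
    rw [hspan_eq]
    infer_instance
  have hGfin : ∀ k, FiniteDimensional F (G k) := by
    intro k
    haveI : ∀ i, FiniteDimensional F (Submodule.span F
        (Set.image2 (fun a b => a ⊗ₜ[F] b) (FA i : Set A) (FB (k-i) : Set B))) :=
      fun i => hTfin i (k-i)
    rw [hG k, ← Finset.sup_eq_iSup]
    exact Submodule.finiteDimensional_finset_sup _ _
  refine ⟨hmono, ?_, ?_, ?_, hGfin, ?_⟩
  · intro x
    induction x using TensorProduct.induction_on with
    | zero => exact ⟨0, (G 0).zero_mem⟩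
    | tmul a b =>
      obtain ⟨i, hi⟩ := hAexh a; obtain ⟨j, hj⟩ := hBexh b
      refine ⟨i + j, hmem i (i+j) a b (by omega) hi ?_⟩
      rwa [show i + j - i = j by omega]
    | add x y hx hy =>
      obtain ⟨k1, h1⟩ := hx; obtain ⟨k2, h2⟩ := hy
      exact ⟨max k1 k2, Submodule.add_mem _ (hmono (le_max_left _ _) h1)
        (hmono (le_max_right _ _) h2)⟩
  · rw [Algebra.TensorProduct.one_def]
    exact hmem 0 0 1 1 le_rfl hAone hBone
  · intro k l x y hx hy
    have hGspan : ∀ m, G m = Submodule.span F (⋃ i ∈ Finset.range (m+1),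
        Set.image2 (fun a b => a ⊗ₜ[F] b) (FA i : Set A) (FB (m-i) : Set B)) := by
      intro m; rw [hG m, Submodule.span_iUnion₂]
    have hle : G k * G l ≤ G (k+l) := by
      rw [hGspan k, hGspan l, Submodule.span_mul_span, Submodule.span_le]
      rintro t ht
      rw [Set.mem_mul] at ht
      obtain ⟨u, hu, v, hv, rfl⟩ := ht
      simp only [Set.mem_iUnion] at hu hv
      obtain ⟨i, hi, hu⟩ := hu
      obtain ⟨j, hj, hv⟩ := hv
      obtain ⟨a, ha, b, hb, rfl⟩ := hu
      obtain ⟨a', ha', b', hb', rfl⟩ := hv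
      have hik : i ≤ k := by have := Finset.mem_range.1 hi; omega
      have hjl : j ≤ l := by have := Finset.mem_range.1 hj; omega
      rw [Algebra.TensorProduct.tmul_mul_tmul]
      exact SetLike.mem_coe.2 (hmem (i+j) (k+l) _ _ (by omega)
        (hAmul i j a a' ha ha')
        (hBmono (show (k-i)+(l-j) ≤ (k+l)-(i+j) by omega) (hBmul _ _ b b' hb hb')))
    exact hle (Submodule.mul_mem_mul hx hy)
  · -- limsup
    by_cases hbdd : Filter.IsBoundedUnder (· ≤ ·) Filter.atTop
        (fun k : ℕ => ((Module.finrank F (G k) : ℝ)) ^ ((1 : ℝ) / (k : ℝ)))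
    swap
    · rw [Filter.limsup_eq]
      have hempty : {a : ℝ | ∀ᶠ n in Filter.atTop,
          ((Module.finrank F (G n) : ℝ)) ^ ((1 : ℝ) / (n : ℝ)) ≤ a} = ∅ := by
        by_contra h
        obtain ⟨a, ha⟩ := Set.nonempty_iff_ne_empty.2 h
        exact hbdd ⟨a, ha⟩
      rw [hempty, Real.sInf_empty]
      exact zero_le_one
    have hcob : Filter.IsCoboundedUnder (· ≤ ·) Filter.atTop
        (fun k : ℕ => ((Module.finrank F (G k) : ℝ)) ^ ((1 : ℝ) / (k : ℝ))) :=
      Filter.IsBoundedUnder.isCoboundedUnder_le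
        (Filter.isBoundedUnder_of ⟨0, fun k => Real.rpow_nonneg (Nat.cast_nonneg _) _⟩)
    by_cases htriv : Nontrivial (A ⊗[F] B)
    swap
    · have hsub : Subsingleton (A ⊗[F] B) := not_nontrivial_iff_subsingleton.1 htriv
      refine Filter.limsup_le_of_le hcob ?_
      filter_upwards [Filter.eventually_ge_atTop 1] with k hk
      have : Module.finrank F (G k) = 0 := by
        haveI : Subsingleton (G k) := inferInstance
        exact Module.finrank_zero_of_subsingleton
      rw [this]
      rw [Nat.cast_zero, Real.zero_rpow (one_div_ne_zero (Nat.cast_ne_zero.2 (by omega)))]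
      exact zero_le_one
    -- nontrivial case
    haveI := htriv
    have hAnt : Nontrivial A := by
      by_contra h
      haveI : Subsingleton A := not_nontrivial_iff_subsingleton.1 h
      exact (not_subsingleton_iff_nontrivial.2 htriv) inferInstance
    have hBnt : Nontrivial B := by
      by_contra h
      haveI : Subsingleton B := not_nontrivial_iff_subsingleton.1 h
      exact (not_subsingleton_iff_nontrivial.2 htriv) inferInstance
    -- dual functionals
    obtain ⟨ψB, hψB⟩ : ∃ ψ : Module.Dual F B, ψ 1 = 1 := by
      have : ∃ φ : Module.Dual F B, φ (1:B) ≠ 0 := by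
        by_contra h
        push_neg at h
        exact one_ne_zero ((Module.forall_dual_apply_eq_zero_iff F (1:B)).1 h)
      obtain ⟨φ, hφ⟩ := this
      exact ⟨(φ 1)⁻¹ • φ, by simp [inv_mul_cancel₀ hφ]⟩
    obtain ⟨ψA, hψA⟩ : ∃ ψ : Module.Dual F A, ψ 1 = 1 := by
      have : ∃ φ : Module.Dual F A, φ (1:A) ≠ 0 := by
        by_contra h
        push_neg at h
        exact one_ne_zero ((Module.forall_dual_apply_eq_zero_iff F (1:A)).1 h)
      obtain ⟨φ, hφ⟩ := this
      exact ⟨(φ 1)⁻¹ • φ, by simp [inv_mul_cancel₀ hφ]⟩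
    set jA : A →ₗ[F] A ⊗[F] B := (TensorProduct.mk F A B).flip 1 with hjAdef
    set jB : B →ₗ[F] A ⊗[F] B := TensorProduct.mk F A B 1 with hjBdef
    have hinjA : Function.Injective jA := by
      have : Function.LeftInverse
          ((TensorProduct.rid F A).toLinearMap ∘ₗ LinearMap.lTensor A ψB) jA := by
        intro a
        simp [hjAdef, TensorProduct.rid_tmul, hψB]
      exact this.injective
    have hinjB : Function.Injective jB := by
      have : Function.LeftInverse
          ((TensorProduct.lid F B).toLinearMap ∘ₗ LinearMap.rTensor B ψA) jB := by
        intro b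
        simp [hjBdef, TensorProduct.lid_tmul, hψA]
      exact this.injective
    have haleC : ∀ k, Module.finrank F (FA k) ≤ Module.finrank F (G k) := by
      intro k
      haveI := hGfin k
      have hmap : (FA k).map jA ≤ G k := by
        rintro _ ⟨a, ha, rfl⟩
        have h1 : (1:B) ∈ FB (k - k) := by rw [Nat.sub_self]; exact hBone
        exact hmem k k a 1 le_rfl ha h1
      calc Module.finrank F (FA k) = Module.finrank F ((FA k).map jA) :=
            (Submodule.equivMapOfInjective jA hinjA (FA k)).finrank_eq
        _ ≤ Module.finrank F (G k) := Submodule.finrank_mono hmap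
    have hbleC : ∀ k, Module.finrank F (FB k) ≤ Module.finrank F (G k) := by
      intro k
      haveI := hGfin k
      have hmap : (FB k).map jB ≤ G k := by
        rintro _ ⟨b, hb, rfl⟩
        have h1 : b ∈ FB (k - 0) := by rw [Nat.sub_zero]; exact hb
        exact hmem 0 k 1 b (Nat.zero_le _) hAone h1
      calc Module.finrank F (FB k) = Module.finrank F ((FB k).map jB) :=
            (Submodule.equivMapOfInjective jB hinjB (FB k)).finrank_eq
        _ ≤ Module.finrank F (G k) := Submodule.finrank_mono hmap
    have hab : Filter.IsBoundedUnder (· ≤ ·) Filter.atTop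
        (fun k : ℕ => ((Module.finrank F (FA k) : ℝ)) ^ ((1 : ℝ) / (k : ℝ))) := by
      refine hbdd.mono_le ?_
      filter_upwards with k
      exact Real.rpow_le_rpow (Nat.cast_nonneg _) (Nat.cast_le.2 (haleC k)) (by positivity)
    have hbb : Filter.IsBoundedUnder (· ≤ ·) Filter.atTop
        (fun k : ℕ => ((Module.finrank F (FB k) : ℝ)) ^ ((1 : ℝ) / (k : ℝ))) := by
      refine hbdd.mono_le ?_
      filter_upwards with k
      exact Real.rpow_le_rpow (Nat.cast_nonneg _) (Nat.cast_le.2 (hbleC k)) (by positivity)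
    -- the convolution bound on dimensions
    have hGrank : ∀ k, Module.finrank F (G k) ≤ ∑ i ∈ Finset.range (k+1),
        Module.finrank F (FA i) * Module.finrank F (FB (k-i)) := by
      intro k
      haveI hT : ∀ i, FiniteDimensional F (Submodule.span F
          (Set.image2 (fun a b => a ⊗ₜ[F] b) (FA i : Set A) (FB (k-i) : Set B))) :=
        fun i => hTfin i (k-i)
      have h1 : Module.finrank F (G k) = Module.finrank F
          (((Finset.range (k+1)).sup fun i => Submodule.span F
            (Set.image2 (fun a b => a ⊗ₜ[F] b) (FA i : Set A) (FB (k-i) : Set B)))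
              : Submodule F (A ⊗[F] B)) := by
        rw [hG k, ← Finset.sup_eq_iSup]
      rw [h1]
      refine (aux_finrank_finset_sup_le _ _).trans (Finset.sum_le_sum fun i _ => ?_)
      -- term bound
      haveI := hAfin i; haveI := hBfin (k-i)
      have hspan_eq : Submodule.span F
          (Set.image2 (fun a b => a ⊗ₜ[F] b) (FA i : Set A) (FB (k-i) : Set B))
          = LinearMap.range (TensorProduct.map (FA i).subtype (FB (k-i)).subtype) := by
        rw [TensorProduct.range_map_eq_span_tmul]
        congr 1
        ext t
        constructor
        · rintro ⟨a, ha, b, hb, rfl⟩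
          exact ⟨⟨a, ha⟩, ⟨b, hb⟩, rfl⟩
        · rintro ⟨m, n, rfl⟩
          exact ⟨m, m.2, n, n.2, rfl⟩
      rw [hspan_eq]
      have h2 := LinearMap.finrank_range_le (TensorProduct.map (FA i).subtype (FB (k-i)).subtype)
      rwa [Module.finrank_tensorProduct] at h2
    refine aux_conv (fun k => (Module.finrank F (FA k) : ℝ))
      (fun k => (Module.finrank F (FB k) : ℝ))
      (fun k => (Module.finrank F (G k) : ℝ))
      (fun k => Nat.cast_nonneg _) (fun k => Nat.cast_nonneg _) (fun k => Nat.cast_nonneg _)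
      hab hbb hAslow hBslow ?_
    intro k
    have := hGrank k
    push_cast
    exact_mod_cast Nat.cast_le.2 this
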